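/- Let a > c and b > d (dominant-strategy game with action 1 dominant). Let φ : ℝ → ℝ be continuously differentiable with φ(x) > 0 for all x ∈ (0,1], such that there exist constants h > 0 and k > 0 with φ(x)/x^h → k as x → 0⁺, and such that there exists ε* > 0 with φ(x) > a − c for all x ∈ [1−ε*, 1]. Then every solution (x, g) of the conformity-gain controlled replicator equation with x(0) ∈ [0,1) and g(0) > 0 satisfies x(t) → 0 as t → ∞ and g(t) → ḡ as t → ∞ for some constant ḡ > 0. -/

import Mathlib

open Filter Set

/-- Exponential representation of solutions of `y' = ψ t * y`. -/
lemma expRep (ψ : ℝ → ℝ) (hψ : Continuous ψ) (y : ℝ → ℝ)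
    (hy : ∀ t, 0 ≤ t → HasDerivAt y (ψ t * y t) t) :
    ∀ t, 0 ≤ t → y t = y 0 * Real.exp (∫ s in (0:ℝ)..t, ψ s) := by
  intro t ht
  set Ψ : ℝ → ℝ := fun t => ∫ s in (0:ℝ)..t, ψ s with hΨdef
  have hΨ : ∀ s : ℝ, HasDerivAt Ψ (ψ s) s := fun s =>
    (hψ.integral_hasStrictDerivAt 0 s).hasDerivAt
  set F : ℝ → ℝ := fun t => y t * Real.exp (-Ψ t) with hFdef
  have hF : ∀ s, 0 ≤ s → HasDerivAt F 0 s := by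
    intro s hs
    have h1 : HasDerivAt (fun t => Real.exp (-Ψ t)) (-ψ s * Real.exp (-Ψ s)) s := by
      have := (((hΨ s).neg).exp)
      simpa [mul_comm] using this
    have := (hy s hs).mul h1
    exact this.congr_deriv (by ring)
  have hconst : ∀ u ∈ Icc (0:ℝ) t, F u = F 0 := by
    apply constant_of_has_deriv_right_zero
    · intro u hu
      exact ((hy u hu.1).mul (((hΨ u).neg).exp)).continuousAt.continuousWithinAt
    · intro u hu
      exact (hF u hu.1).hasDerivWithinAt
  have h0 : F t = F 0 := hconst t ⟨ht, le_rfl⟩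
  have hΨ0 : Ψ 0 = 0 := by simp [hΨdef]
  have := h0
  simp only [hFdef, hΨ0, neg_zero, Real.exp_zero, mul_one] at this
  have : y t = y 0 / Real.exp (-Ψ t) := by
    field_simp at this ⊢
    linarith [this]
  rw [this, Real.exp_neg]
  field_simp
  rfl

/-- If `y s₁ < C` and the derivative is negative on the level set `y = C` (for `t ≥ s₁`),
then `y` stays below `C` on `[s₁, ∞)`. -/
lemma invLemma (y y' : ℝ → ℝ) (s₁ C : ℝ)
    (hy : ∀ t, s₁ ≤ t → HasDerivAt y (y' t) t)
    (h0 : y s₁ < C) (hC : ∀ t, s₁ ≤ t → y t = C → y' t < 0) :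
    ∀ t, s₁ ≤ t → y t < C := by
  by_contra hcon
  push_neg at hcon
  obtain ⟨t₂, ht₂, ht₂C⟩ := hcon
  have hcont : ContinuousOn y (Icc s₁ t₂) := fun u hu =>
    (hy u hu.1).continuousAt.continuousWithinAt
  set E : Set ℝ := {t ∈ Icc s₁ t₂ | C ≤ y t} with hE
  have hEne : E.Nonempty := ⟨t₂, ⟨⟨ht₂, le_rfl⟩, ht₂C⟩⟩
  have hEclosed : IsClosed E := by
    have : E = Icc s₁ t₂ ∩ (fun t => y t) ⁻¹' (Ici C) ∩ Icc s₁ t₂ := by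
      ext u; simp [hE, and_comm, and_assoc]; tauto
    rw [this]
    exact (hcont.preimage_isClosed_of_isClosed isClosed_Icc isClosed_Ici).inter isClosed_Icc
  have hEbdd : BddBelow E := ⟨s₁, fun u hu => hu.1.1⟩
  set τ := sInf E with hτ
  have hτE : τ ∈ E := hEclosed.csInf_mem hEne hEbdd
  have hτs₁ : s₁ ≤ τ := hτE.1.1
  have hlt : ∀ s, s₁ ≤ s → s < τ → y s < C := by
    intro s hs hsτ
    by_contra hge
    push_neg at hge
    have : s ∈ E := ⟨⟨hs, hsτ.le.trans hτE.1.2⟩, hge⟩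
    exact absurd (csInf_le hEbdd this) (not_le.mpr hsτ)
  have hτne : s₁ < τ := by
    rcases eq_or_lt_of_le hτs₁ with h | h
    · exact absurd (h ▸ hτE.2) (not_le.mpr h0)
    · exact h
  have hyτle : y τ ≤ C := by
    have htend : Tendsto y (nhdsWithin τ (Iio τ)) (nhds (y τ)) :=
      (hy τ hτs₁).continuousAt.continuousWithinAt.tendsto
    have hev : ∀ᶠ s in nhdsWithin τ (Iio τ), y s ≤ C := by
      filter_upwards [Ioo_mem_nhdsLT hτne] with s hs
      exact (hlt s hs.1.le hs.2).le
    exact le_of_tendsto htend hev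
  have hyτ : y τ = C := le_antisymm hyτle hτE.2
  have hder : y' τ < 0 := hC τ hτs₁ hyτ
  have hslope : Tendsto (slope y τ) (nhdsWithin τ (Iio τ)) (nhds (y' τ)) := by
    have := (hy τ hτs₁).hasDerivWithinAt (s := Iio τ)
    rw [hasDerivWithinAt_iff_tendsto_slope' (notMem_Iio.mpr le_rfl)] at this
    exact this
  have hev : ∀ᶠ s in nhdsWithin τ (Iio τ), slope y τ s < 0 :=
    hslope.eventually_lt_const hder
  have hev2 : ∀ᶠ s in nhdsWithin τ (Iio τ), s₁ < s := by
    filter_upwards [Ioo_mem_nhdsLT hτne] with s hs using hs.1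
  have hev3 : ∀ᶠ s in nhdsWithin τ (Iio τ), s ∈ Iio τ :=
    eventually_mem_nhdsWithin
  obtain ⟨s, ⟨hs1, hs2⟩, hs3⟩ := ((hev.and hev2).and hev3).exists
  have hsτ : s < τ := hs3
  have hyslt : y s < C := hlt s hs2.le hsτ
  have hpos : 0 < y s - y τ := by
    have hslope_eq : slope y τ s = (y s - y τ) / (s - τ) := slope_def_field y τ s
    rw [hslope_eq] at hs1
    have hsub : s - τ < 0 := by linarith
    rcases div_neg_iff.mp hs1 with ⟨p1, p2⟩ | ⟨p1, p2⟩
    · linarith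
    · linarith
  rw [hyτ] at hpos
  linarith

/-- Monotonicity on `[T, ∞)` from a nonnegative derivative. -/
lemma monoIci (y y' : ℝ → ℝ) (T : ℝ)
    (hy : ∀ t, T ≤ t → HasDerivAt y (y' t) t)
    (hpos : ∀ t, T ≤ t → 0 ≤ y' t) :
    ∀ s t, T ≤ s → s ≤ t → y s ≤ y t := by
  have h := monotoneOn_of_deriv_nonneg (convex_Ici T)
    (fun u hu => (hy u hu).continuousAt.continuousWithinAt)
    (fun u hu => by
      rw [interior_Ici] at hu
      exact (hy u hu.le).differentiableAt.differentiableWithinAt)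
    (fun u hu => by
      rw [interior_Ici] at hu
      rw [(hy u hu.le).deriv]
      exact hpos u hu.le)
  intro s t hs hst
  exact h (mem_Ici.mpr hs) (mem_Ici.mpr (hs.trans hst)) hst

/-- Antitonicity on `[T, ∞)` from a nonpositive derivative. -/
lemma antiIci (y y' : ℝ → ℝ) (T : ℝ)
    (hy : ∀ t, T ≤ t → HasDerivAt y (y' t) t)
    (hneg : ∀ t, T ≤ t → y' t ≤ 0) :
    ∀ s t, T ≤ s → s ≤ t → y t ≤ y s := by
  have h := monoIci (fun u => -y u) (fun u => -y' u) T
    (fun t ht => (hy t ht).neg) (fun t ht => by simpa using hneg t ht)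
  intro s t hs hst
  have := h s t hs hst
  simpa using this

/-- `(x, g)` is a solution of the conformity-gain controlled replicator equation
(control matrix `G⁽⁴⁾`): `ẋ = x(1−x)((a+d−b−c)x + b − d − g(1−x))`, `ġ = φ(x) g`. -/
def IsConformitySolution (a b c d : ℝ) (φ : ℝ → ℝ) (x g : ℝ → ℝ) : Prop :=
  ∀ t : ℝ, 0 ≤ t →
    HasDerivAt x
      (x t * (1 - x t) * ((a + d - b - c) * x t + (b - d) - g t * (1 - x t))) t ∧
    HasDerivAt g (φ (x t) * g t) t

set_option maxHeartbeats 2000000 in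
/-- Consensus stabilization via the conformity-gain controller in a dominant-strategy
game with action 1 dominant (`a > c`, `b > d`). -/
theorem consensus_stabilization_dominant (a b c d : ℝ) (hac : a > c) (hbd : b > d)
    (φ : ℝ → ℝ) (hφ : ContDiff ℝ 1 φ)
    (h1 : ∀ y : ℝ, 0 < y → y ≤ 1 → 0 < φ y)
    (h2 : ∃ h k : ℝ, 0 < h ∧ 0 < k ∧
      Filter.Tendsto (fun y : ℝ => φ y / y ^ h) (nhdsWithin 0 (Set.Ioi 0)) (nhds k))
    (h3 : ∃ ε : ℝ, 0 < ε ∧ ∀ y : ℝ, 1 - ε ≤ y → y ≤ 1 → a - c < φ y)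
    (x g : ℝ → ℝ) (hsol : IsConformitySolution a b c d φ x g)
    (hx0 : x 0 ∈ Set.Ico (0 : ℝ) 1) (hg0 : 0 < g 0) :
    Filter.Tendsto x Filter.atTop (nhds 0) ∧
    ∃ gbar : ℝ, 0 < gbar ∧ Filter.Tendsto g Filter.atTop (nhds gbar) := by
  classical
  obtain ⟨hx00, hx01⟩ := hx0
  obtain ⟨h, k, hh, hk, hlim⟩ := h2
  have hφc : Continuous φ := hφ.continuous
  -- φ 0 = 0
  have hφ0 : φ 0 = 0 := by
    have hr : Tendsto (fun y : ℝ => y ^ h) (nhdsWithin 0 (Ioi 0)) (nhds 0) := by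
      have := (Real.continuousAt_rpow_const 0 h (Or.inr hh.le)).continuousWithinAt
        (s := Ioi (0:ℝ))
      have h0 : (0:ℝ) ^ h = 0 := Real.zero_rpow (ne_of_gt hh)
      simpa [ContinuousWithinAt, h0] using this
    have hmul : Tendsto (fun y : ℝ => (φ y / y ^ h) * y ^ h) (nhdsWithin 0 (Ioi 0))
        (nhds (k * 0)) := hlim.mul hr
    have heq : ∀ y ∈ Ioi (0:ℝ), (φ y / y ^ h) * y ^ h = φ y := by
      intro y hy
      have : (y:ℝ) ^ h ≠ 0 := ne_of_gt (Real.rpow_pos_of_pos hy h)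
      field_simp
    have hφz : Tendsto φ (nhdsWithin 0 (Ioi 0)) (nhds 0) := by
      rw [mul_zero] at hmul
      exact hmul.congr' (eventually_nhdsWithin_of_forall heq)
    have hφz' : Tendsto φ (nhdsWithin 0 (Ioi 0)) (nhds (φ 0)) :=
      (hφc.continuousAt).continuousWithinAt.tendsto
    exact tendsto_nhds_unique hφz' hφz
  have hφnn : ∀ y : ℝ, 0 ≤ y → y ≤ 1 → 0 ≤ φ y := by
    intro y hy hy1
    rcases eq_or_lt_of_le hy with hz | hz
    · rw [← hz, hφ0]
    · exact (h1 y hz hy1).le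
  -- continuity of x, g at nonnegative times
  have hxc : ∀ t : ℝ, 0 ≤ t → ContinuousAt x t := fun t ht => (hsol t ht).1.continuousAt
  have hgc : ∀ t : ℝ, 0 ≤ t → ContinuousAt g t := fun t ht => (hsol t ht).2.continuousAt
  -- continuous modifications
  set X : ℝ → ℝ := fun t => x (max t 0) with hXdef
  set G : ℝ → ℝ := fun t => g (max t 0) with hGdef
  have hXeq : ∀ t : ℝ, 0 ≤ t → X t = x t := fun t ht => by
    simp [hXdef, max_eq_left ht]
  have hGeq : ∀ t : ℝ, 0 ≤ t → G t = g t := fun t ht => by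
    simp [hGdef, max_eq_left ht]
  have hmaxc : Continuous (fun t : ℝ => max t 0) := continuous_id.max continuous_const
  have hXc : Continuous X := by
    rw [continuous_iff_continuousAt]
    intro t
    exact ContinuousAt.comp (hxc (max t 0) (le_max_right _ _)) hmaxc.continuousAt
  have hGc : Continuous G := by
    rw [continuous_iff_continuousAt]
    intro t
    exact ContinuousAt.comp (hgc (max t 0) (le_max_right _ _)) hmaxc.continuousAt
  -- the integrated adaptation rate
  set ψg : ℝ → ℝ := fun t => φ (X t) with hψgdef
  have hψgc : Continuous ψg := hφc.comp hXc
  set Φ : ℝ → ℝ := fun t => ∫ s in (0:ℝ)..t, ψg s with hΦdef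
  have hΦd : ∀ t : ℝ, HasDerivAt Φ (ψg t) t := fun t =>
    (hψgc.integral_hasStrictDerivAt 0 t).hasDerivAt
  -- representation of g
  have hgrep : ∀ t, 0 ≤ t → g t = g 0 * Real.exp (Φ t) := by
    apply expRep ψg hψgc g
    intro t ht
    have h2 := (hsol t ht).2
    have : ψg t = φ (x t) := by rw [hψgdef]; simp only [hXeq t ht]
    rw [this]
    exact h2
  -- representation of x
  set ψx : ℝ → ℝ := fun t =>
    (1 - X t) * ((a + d - b - c) * X t + (b - d) - G t * (1 - X t)) with hψxdef
  have hψxc : Continuous ψx := by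
    apply Continuous.mul
    · exact continuous_const.sub hXc
    · exact ((continuous_const.mul hXc).add continuous_const).sub
        (hGc.mul (continuous_const.sub hXc))
  have hxrep : ∀ t, 0 ≤ t → x t = x 0 * Real.exp (∫ s in (0:ℝ)..t, ψx s) := by
    apply expRep ψx hψxc x
    intro t ht
    have h1' := (hsol t ht).1
    have : ψx t * x t
        = x t * (1 - x t) * ((a + d - b - c) * x t + (b - d) - g t * (1 - x t)) := by
      rw [hψxdef]; simp only [hXeq t ht, hGeq t ht]; ring
    rw [this]
    exact h1'
  -- representation of 1 - x
  set ψy : ℝ → ℝ := fun t =>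
    -(X t) * ((a + d - b - c) * X t + (b - d) - G t * (1 - X t)) with hψydef
  have hψyc : Continuous ψy := by
    apply Continuous.mul
    · exact hXc.neg
    · exact ((continuous_const.mul hXc).add continuous_const).sub
        (hGc.mul (continuous_const.sub hXc))
  have hyrep : ∀ t, 0 ≤ t →
      1 - x t = (1 - x 0) * Real.exp (∫ s in (0:ℝ)..t, ψy s) := by
    apply expRep ψy hψyc (fun t => 1 - x t)
    intro t ht
    have h1' := ((hsol t ht).1.const_sub 1)
    have heq : ψy t * (1 - x t)
        = -(x t * (1 - x t) * ((a + d - b - c) * x t + (b - d) - g t * (1 - x t))) := by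
      rw [hψydef]; simp only [hXeq t ht, hGeq t ht]; ring
    rw [heq]
    exact h1'
  -- basic range facts
  have hxlt1 : ∀ t, 0 ≤ t → x t < 1 := by
    intro t ht
    have := hyrep t ht
    have hp : 0 < (1 - x 0) * Real.exp (∫ s in (0:ℝ)..t, ψy s) :=
      mul_pos (by linarith) (Real.exp_pos _)
    linarith
  have hxge0 : ∀ t, 0 ≤ t → 0 ≤ x t := by
    intro t ht
    rw [hxrep t ht]
    positivity
  have hgpos : ∀ t, 0 ≤ t → 0 < g t := by
    intro t ht
    rw [hgrep t ht]
    positivity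
  have hψgnn : ∀ t : ℝ, 0 ≤ ψg t := by
    intro t
    rw [hψgdef]
    exact hφnn _ (hxge0 _ (le_max_right _ _)) (hxlt1 _ (le_max_right _ _)).le
  have hΦmono : Monotone Φ := by
    apply monotone_of_deriv_nonneg
    · exact fun t => (hΦd t).differentiableAt
    · intro t
      rw [(hΦd t).deriv]
      exact hψgnn t
  by_cases hx0z : x 0 = 0
  · -- degenerate case : x ≡ 0, g constant
    have hxzero : ∀ t, 0 ≤ t → x t = 0 := by
      intro t ht
      rw [hxrep t ht, hx0z, zero_mul]
    have hΦzero : ∀ t : ℝ, Φ t = 0 := by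
      intro t
      have hz : ∀ s : ℝ, ψg s = 0 := by
        intro s
        have hXs : X s = 0 := hxzero _ (le_max_right _ _)
        show φ (X s) = 0
        rw [hXs, hφ0]
      rw [hΦdef]
      simp [hz]
    constructor
    · apply Tendsto.congr' (f₁ := fun _ => (0:ℝ))
      · filter_upwards [eventually_ge_atTop (0:ℝ)] with t ht
        exact (hxzero t ht).symm
      · exact tendsto_const_nhds
    · refine ⟨g 0, hg0, ?_⟩
      apply Tendsto.congr' (f₁ := fun _ => g 0)
      · filter_upwards [eventually_ge_atTop (0:ℝ)] with t ht
        rw [hgrep t ht, hΦzero, Real.exp_zero, mul_one]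
      · exact tendsto_const_nhds
  · -- main case
    have hx0p : 0 < x 0 := lt_of_le_of_ne hx00 (Ne.symm hx0z)
    have hxpos : ∀ t, 0 ≤ t → 0 < x t := by
      intro t ht
      rw [hxrep t ht]
      positivity
    -- payoff gap function and constants
    set maxf : ℝ := max (a - c) (b - d) with hmaxfdef
    have hmaxfpos : 0 < maxf := lt_of_lt_of_le (by linarith) (le_max_left _ _)
    have hfle : ∀ y : ℝ, 0 ≤ y → y ≤ 1 → (a + d - b - c) * y + (b - d) ≤ maxf := by
      intro y hy hy1
      have hid : (a + d - b - c) * y + (b - d) = y * (a - c) + (1 - y) * (b - d) := by ring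
      rw [hid]
      calc y * (a - c) + (1 - y) * (b - d)
          ≤ y * maxf + (1 - y) * maxf := by
            apply add_le_add
            · exact mul_le_mul_of_nonneg_left (le_max_left _ _) hy
            · exact mul_le_mul_of_nonneg_left (le_max_right _ _) (by linarith)
        _ = maxf := by ring
    -- ζ near 1
    obtain ⟨ε₀, δ₀, hε₀pos, hε₀le, hδ₀pos, hζge⟩ :
        ∃ ε₀ δ₀ : ℝ, 0 < ε₀ ∧ ε₀ ≤ 1/2 ∧ 0 < δ₀ ∧
          ∀ y : ℝ, 1 - ε₀ ≤ y → y ≤ 1 →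
            δ₀ ≤ φ y - y * ((a + d - b - c) * y + (b - d)) := by
      obtain ⟨εs, hεs, hφbig⟩ := h3
      have hφ1 : a - c < φ 1 := hφbig 1 (by linarith) le_rfl
      set ζ : ℝ → ℝ := fun y => φ y - y * ((a + d - b - c) * y + (b - d)) with hζdef
      have hζc : Continuous ζ := by
        apply hφc.sub
        exact continuous_id.mul (((continuous_const.mul continuous_id).add
          continuous_const))
      have hζ1 : 0 < ζ 1 := by
        have : ζ 1 = φ 1 - (a - c) := by rw [hζdef]; ring_nf
        rw [this]; linarith
      have hev : ∀ᶠ y in nhds 1, ζ 1 / 2 < ζ y :=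
        hζc.continuousAt.eventually_const_lt (by linarith)
      rw [Metric.eventually_nhds_iff] at hev
      obtain ⟨r, hr, hrb⟩ := hev
      refine ⟨min (r/2) (1/2), ζ 1 / 2, lt_min (by linarith) (by norm_num),
        min_le_right _ _, by linarith, ?_⟩
      intro y hy1 hy2
      have : dist y 1 < r := by
        rw [Real.dist_eq, abs_lt]
        constructor
        · have := min_le_left (r/2) (1/2); linarith
        · linarith
      exact (hrb this).le
    -- growth bound for φ near 0
    obtain ⟨Cφ, hCφ, hCφb⟩ :
        ∃ Cφ : ℝ, 0 < Cφ ∧ ∀ y : ℝ, 0 < y → y ≤ 1 → φ y ≤ Cφ * y ^ h := by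
      have hev : ∀ᶠ y in nhdsWithin 0 (Ioi 0), φ y / y ^ h < k + 1 :=
        hlim.eventually_lt_const (by linarith)
      rw [eventually_iff, mem_nhdsGT_iff_exists_Ioo_subset] at hev
      obtain ⟨η, hη0, hηsub⟩ := hev
      have hη0' : (0:ℝ) < η := hη0
      set η' := min η 1 with hη'def
      have hη'pos : 0 < η' := lt_min hη0' one_pos
      have hη'le1 : η' ≤ 1 := min_le_right _ _
      obtain ⟨ymax, hymem, hymax⟩ :=
        isCompact_Icc.exists_isMaxOn (Set.nonempty_Icc.mpr hη'le1)
          (hφc.continuousOn (s := Icc η' 1))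
      set Mφ := max (φ ymax) 0 + 1 with hMdef
      have hMpos : 0 < Mφ := by positivity
      have hηh : (0:ℝ) < η' ^ h := Real.rpow_pos_of_pos hη'pos h
      set Cφ := max (k + 1) (Mφ / η' ^ h) with hCdef
      have hCpos : 0 < Cφ := lt_of_lt_of_le (by linarith) (le_max_left _ _)
      refine ⟨Cφ, hCpos, fun y hy hy1 => ?_⟩
      have hyh : (0:ℝ) < y ^ h := Real.rpow_pos_of_pos hy h
      by_cases hcase : y < η'
      · have : y ∈ Ioo (0:ℝ) η := ⟨hy, lt_of_lt_of_le hcase (min_le_left _ _)⟩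
        have hlt : φ y / y ^ h < k + 1 := hηsub this
        have : φ y < (k + 1) * y ^ h := by
          rw [div_lt_iff₀ hyh] at hlt; linarith
        calc φ y ≤ (k+1) * y ^ h := this.le
          _ ≤ Cφ * y ^ h := by
              apply mul_le_mul_of_nonneg_right (le_max_left _ _) hyh.le
      · push_neg at hcase
        have hymem' : y ∈ Icc η' 1 := ⟨hcase, hy1⟩
        have hb1 : φ y ≤ φ ymax := hymax hymem'
        have hb2 : φ y ≤ Mφ := by
          calc φ y ≤ φ ymax := hb1
            _ ≤ max (φ ymax) 0 := le_max_left _ _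
            _ ≤ Mφ := by rw [hMdef]; linarith
        have hb3 : η' ^ h ≤ y ^ h := Real.rpow_le_rpow hη'pos.le hcase hh.le
        calc φ y ≤ Mφ := hb2
          _ = (Mφ / η' ^ h) * η' ^ h := by field_simp
          _ ≤ Cφ * y ^ h := by
              apply mul_le_mul (le_max_right _ _) hb3 hηh.le hCpos.le
    -- Φ is bounded above
    obtain ⟨B, hB⟩ : ∃ B : ℝ, ∀ t : ℝ, Φ t ≤ B := by
      by_contra hcon
      push_neg at hcon
      set Gbig := (maxf + 1) / ε₀ with hGbigdef
      have hGbigpos : 0 < Gbig := by positivity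
      obtain ⟨T₀, hT₀⟩ := hcon (Real.log (Gbig / g 0))
      set T := max T₀ 0 with hTdef
      have hT0 : (0:ℝ) ≤ T := le_max_right _ _
      have hglarge : ∀ t, T ≤ t → Gbig < g t := by
        intro t ht
        have h₁ : Real.log (Gbig / g 0) < Φ t :=
          lt_of_lt_of_le hT₀ (hΦmono (le_trans (le_max_left _ _) ht))
        rw [hgrep t (le_trans hT0 ht)]
        have h₂ : Gbig / g 0 < Real.exp (Φ t) := by
          calc Gbig / g 0 = Real.exp (Real.log (Gbig / g 0)) :=
                (Real.exp_log (by positivity)).symm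
            _ < Real.exp (Φ t) := Real.exp_lt_exp.mpr h₁
        calc Gbig = (Gbig / g 0) * g 0 := by field_simp
          _ < Real.exp (Φ t) * g 0 := mul_lt_mul_of_pos_right h₂ hg0
          _ = g 0 * Real.exp (Φ t) := by ring
      by_cases hcase : ∃ t₁, T ≤ t₁ ∧ x t₁ < 1 - ε₀
      · -- Claim A : once below 1 - ε₀, x decays exponentially, so Φ is bounded
        obtain ⟨t₁, ht₁T, ht₁x⟩ := hcase
        have ht₁0 : (0:ℝ) ≤ t₁ := le_trans hT0 ht₁T
        have hxd : ∀ t, t₁ ≤ t → HasDerivAt x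
            (x t * (1 - x t) * ((a + d - b - c) * x t + (b - d) - g t * (1 - x t))) t :=
          fun t ht => (hsol t (le_trans ht₁0 ht)).1
        have hinv : ∀ t, t₁ ≤ t → x t < 1 - ε₀ := by
          apply invLemma x
            (fun t => x t * (1 - x t) * ((a + d - b - c) * x t + (b - d) - g t * (1 - x t)))
            t₁ (1 - ε₀) hxd ht₁x
          intro t ht hxt
          have h0t : (0:ℝ) ≤ t := le_trans ht₁0 ht
          have hgt := hglarge t (le_trans ht₁T ht)
          have hone : (1:ℝ) - x t = ε₀ := by rw [hxt]; ring
          have hxtpos : 0 < x t := by rw [hxt]; linarith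
          have hfb : (a + d - b - c) * x t + (b - d) ≤ maxf :=
            hfle (x t) (hxge0 t h0t) (by rw [hxt]; linarith)
          have hu : maxf + 1 < g t * (1 - x t) := by
            rw [hone]
            calc maxf + 1 = Gbig * ε₀ := by rw [hGbigdef]; field_simp
              _ < g t * ε₀ := mul_lt_mul_of_pos_right hgt hε₀pos
          have hneg : (a + d - b - c) * x t + (b - d) - g t * (1 - x t) < 0 := by linarith
          have : 0 < x t * (1 - x t) := by rw [hone]; positivity
          exact mul_neg_of_pos_of_neg this hneg
        -- exponential decay of x
        set q : ℝ → ℝ := fun t => x t * Real.exp (ε₀ * (t - t₁)) with hqdef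
        have hqd : ∀ t, t₁ ≤ t → HasDerivAt q
            ((x t * (1 - x t) * ((a + d - b - c) * x t + (b - d) - g t * (1 - x t))
              + ε₀ * x t) * Real.exp (ε₀ * (t - t₁))) t := by
          intro t ht
          have h₁ : HasDerivAt (fun s : ℝ => ε₀ * (s - t₁)) ε₀ t := by
            simpa using ((hasDerivAt_id t).sub_const t₁).const_mul ε₀
          have hexp : HasDerivAt (fun s : ℝ => Real.exp (ε₀ * (s - t₁)))
              (Real.exp (ε₀ * (t - t₁)) * ε₀) t := h₁.exp
          have := (hxd t ht).mul hexp
          exact this.congr_deriv (by ring)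
        have hqanti := antiIci q _ t₁ hqd (by
          intro t ht
          have h0t : (0:ℝ) ≤ t := le_trans ht₁0 ht
          have hgt := hglarge t (le_trans ht₁T ht)
          have hx1 := hinv t ht
          have hxp := hxpos t h0t
          have hfb : (a + d - b - c) * x t + (b - d) ≤ maxf :=
            hfle (x t) (hxge0 t h0t) (by linarith)
          have hyε : ε₀ < 1 - x t := by linarith
          have hu : maxf + 1 < g t * (1 - x t) := by
            calc maxf + 1 = Gbig * ε₀ := by rw [hGbigdef]; field_simp
              _ < g t * (1 - x t) := by
                  apply mul_lt_mul hgt hyε.le hε₀pos (by linarith)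
          have hPY : 0 < x t * (1 - x t) := mul_pos hxp (by linarith)
          have hs1 : x t * (1 - x t) * ((a + d - b - c) * x t + (b - d) - g t * (1 - x t))
              ≤ x t * (1 - x t) * (-1) :=
            mul_le_mul_of_nonneg_left (by linarith) hPY.le
          have hs2 : x t * ε₀ ≤ x t * (1 - x t) :=
            mul_le_mul_of_nonneg_left hyε.le hxp.le
          have hmain : x t * (1 - x t) * ((a + d - b - c) * x t + (b - d) - g t * (1 - x t))
              + ε₀ * x t ≤ 0 := by linarith
          have hE : (0:ℝ) < Real.exp (ε₀ * (t - t₁)) := Real.exp_pos _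
          exact mul_nonpos_of_nonpos_of_nonneg hmain hE.le)
        have hxdecay : ∀ t, t₁ ≤ t → x t ≤ Real.exp (-(ε₀ * (t - t₁))) := by
          intro t ht
          have hq1 : q t ≤ q t₁ := hqanti t₁ t le_rfl ht
          have hqt₁ : q t₁ = x t₁ := by simp [hqdef]
          have hE : (0:ℝ) < Real.exp (ε₀ * (t - t₁)) := Real.exp_pos _
          have hle1 : x t * Real.exp (ε₀ * (t - t₁)) ≤ 1 := by
            have : q t ≤ x t₁ := hqt₁ ▸ hq1
            have hx₁ : x t₁ ≤ 1 := (hxlt1 t₁ ht₁0).le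
            calc x t * Real.exp (ε₀ * (t - t₁)) = q t := rfl
              _ ≤ x t₁ := this
              _ ≤ 1 := hx₁
          rw [Real.exp_neg, ← one_div, le_div_iff₀ hE]
          exact hle1
        -- bound on the integrand
        set lam := ε₀ * h with hlamdef
        have hlam : 0 < lam := mul_pos hε₀pos hh
        have hφx : ∀ t, t₁ ≤ t → ψg t ≤ Cφ * Real.exp (-(lam * (t - t₁))) := by
          intro t ht
          have h0t : (0:ℝ) ≤ t := le_trans ht₁0 ht
          have hX : X t = x t := hXeq t h0t
          have hb1 : φ (X t) ≤ Cφ * (x t) ^ h := by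
            rw [hX]; exact hCφb _ (hxpos t h0t) (hxlt1 t h0t).le
          have hb2 : (x t) ^ h ≤ (Real.exp (-(ε₀ * (t - t₁)))) ^ h :=
            Real.rpow_le_rpow (hxge0 t h0t) (hxdecay t ht) hh.le
          have hb3 : (Real.exp (-(ε₀ * (t - t₁)))) ^ h = Real.exp (-(lam * (t - t₁))) := by
            rw [← Real.exp_mul]
            congr 1
            rw [hlamdef]; ring
          calc ψg t = φ (X t) := rfl
            _ ≤ Cφ * (x t) ^ h := hb1
            _ ≤ Cφ * (Real.exp (-(ε₀ * (t - t₁)))) ^ h :=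
                mul_le_mul_of_nonneg_left hb2 hCφ.le
            _ = Cφ * Real.exp (-(lam * (t - t₁))) := by rw [hb3]
        -- integral bound
        have hbound : ∀ t, Φ t ≤ Φ t₁ + Cφ / lam := by
          intro t
          rcases le_total t t₁ with hle | hle
          · have := hΦmono hle
            have hpos : 0 < Cφ / lam := by positivity
            linarith
          · have hsplit : Φ t₁ + ∫ s in t₁..t, ψg s = Φ t := by
              rw [hΦdef]
              exact intervalIntegral.integral_add_adjacent_intervals
                (hψgc.intervalIntegrable 0 t₁) (hψgc.intervalIntegrable t₁ t)
            have hintle : ∫ s in t₁..t, ψg s ≤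
                ∫ s in t₁..t, Cφ * Real.exp (-(lam * (s - t₁))) := by
              have hcontF : Continuous fun s : ℝ => Cφ * Real.exp (-(lam * (s - t₁))) :=
                continuous_const.mul (Real.continuous_exp.comp
                  ((continuous_const.mul (continuous_id.sub continuous_const)).neg))
              apply intervalIntegral.integral_mono_on hle
                (hψgc.intervalIntegrable t₁ t)
                (hcontF.intervalIntegrable t₁ t)
              intro s hs
              exact hφx s hs.1
            have hexact : ∫ s in t₁..t, Cφ * Real.exp (-(lam * (s - t₁)))
                = (Cφ / lam) * (1 - Real.exp (-(lam * (t - t₁)))) := by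
              have hAd : ∀ s : ℝ, HasDerivAt
                  (fun s : ℝ => -(Cφ / lam) * Real.exp (-(lam * (s - t₁))))
                  (Cφ * Real.exp (-(lam * (s - t₁)))) s := by
                intro s
                have h₁ : HasDerivAt (fun s : ℝ => -(lam * (s - t₁))) (-lam) s := by
                  exact (((hasDerivAt_id s).sub_const t₁).const_mul lam).neg.congr_deriv (by ring)
                have h₂ := h₁.exp
                have := h₂.const_mul (-(Cφ / lam))
                exact this.congr_deriv (by
                  rw [show -(Cφ / lam) * (Real.exp (-(lam * (s - t₁))) * -lam)
                    = (Cφ / lam * lam) * Real.exp (-(lam * (s - t₁))) by ring,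
                    div_mul_cancel₀ _ hlam.ne'])
              have hcontF : Continuous fun s : ℝ => Cφ * Real.exp (-(lam * (s - t₁))) :=
                continuous_const.mul (Real.continuous_exp.comp
                  ((continuous_const.mul (continuous_id.sub continuous_const)).neg))
              rw [intervalIntegral.integral_eq_sub_of_hasDerivAt
                (fun s _ => hAd s) (hcontF.intervalIntegrable t₁ t)]
              have hz : lam * (t₁ - t₁) = 0 := by ring
              rw [hz]
              simp only [neg_zero, Real.exp_zero]
              ring
            have hfinal : (Cφ / lam) * (1 - Real.exp (-(lam * (t - t₁)))) ≤ Cφ / lam := by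
              have hE : (0:ℝ) < Real.exp (-(lam * (t - t₁))) := Real.exp_pos _
              have hp : 0 ≤ Cφ / lam := by positivity
              nlinarith
            linarith [hsplit, hintle, hexact ▸ hintle]
        obtain ⟨t', ht'⟩ := hcon (Φ t₁ + Cφ / lam)
        exact absurd (hbound t') (not_le.mpr ht')
      · -- Claim B : x trapped near 1, then g(1-x) grows and pushes x away : contradiction
        push_neg at hcase
        have hxge : ∀ t, T ≤ t → 1 - ε₀ ≤ x t := hcase
        set L : ℝ → ℝ := fun t => Real.log (g t) + Real.log (1 - x t) with hLdef
        set L' : ℝ → ℝ := fun t => φ (x t) + x t * (g t * (1 - x t))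
          - x t * ((a + d - b - c) * x t + (b - d)) with hL'def
        have hLd : ∀ t, T ≤ t → HasDerivAt L (L' t) t := by
          intro t ht
          have h0t : (0:ℝ) ≤ t := le_trans hT0 ht
          have hgne : g t ≠ 0 := ne_of_gt (hgpos t h0t)
          have hxne : 1 - x t ≠ 0 := ne_of_gt (by linarith [hxlt1 t h0t])
          have hlg : HasDerivAt (fun t => Real.log (g t)) (φ (x t) * g t / g t) t :=
            (hsol t h0t).2.log hgne
          have hlx : HasDerivAt (fun t => Real.log (1 - x t))
              ((-(x t * (1 - x t) * ((a + d - b - c) * x t + (b - d) - g t * (1 - x t))))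
                / (1 - x t)) t :=
            ((hsol t h0t).1.const_sub 1).log hxne
          have := hlg.add hlx
          refine this.congr_deriv ?_
          rw [hL'def]
          field_simp
          ring
        have hLlow : ∀ t, T ≤ t → L T + δ₀ * (t - T) ≤ L t := by
          intro t ht
          have hmono := monoIci (fun t => L t - δ₀ * t) (fun t => L' t - δ₀) T
            (fun t ht => by
              have h₁ : HasDerivAt (fun t : ℝ => δ₀ * t) δ₀ t := by
                simpa using (hasDerivAt_id t).const_mul δ₀
              exact (hLd t ht).sub h₁)
            (fun t ht => by
              show 0 ≤ L' t - δ₀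
              have h0t : (0:ℝ) ≤ t := le_trans hT0 ht
              have hζ := hζge (x t) (hxge t ht) (hxlt1 t h0t).le
              have hxu : 0 ≤ x t * (g t * (1 - x t)) := by
                apply mul_nonneg (hxge0 t h0t)
                apply mul_nonneg (hgpos t h0t).le
                linarith [hxlt1 t h0t]
              have hLt : L' t = φ (x t) + x t * (g t * (1 - x t))
                  - x t * ((a + d - b - c) * x t + (b - d)) := by rw [hL'def]
              rw [hLt]
              linarith)
          have h₆ : L T - δ₀ * T ≤ L t - δ₀ * t := hmono T t (le_refl T) ht
          linarith
        -- u = g (1 - x) eventually exceeds maxf + 1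
        have hexpL : ∀ t, T ≤ t → Real.exp (L t) = g t * (1 - x t) := by
          intro t ht
          have h0t : (0:ℝ) ≤ t := le_trans hT0 ht
          rw [hLdef]
          rw [Real.exp_add, Real.exp_log (hgpos t h0t),
            Real.exp_log (by linarith [hxlt1 t h0t])]
        set t₃ := T + max 0 ((Real.log (maxf + 1) - L T) / δ₀) + 1 with ht₃def
        have ht₃T : T ≤ t₃ := by
          rw [ht₃def]
          have := le_max_left 0 ((Real.log (maxf + 1) - L T) / δ₀)
          linarith
        have hular : ∀ t, t₃ ≤ t → maxf + 1 ≤ g t * (1 - x t) := by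
          intro t ht
          have htT : T ≤ t := le_trans ht₃T ht
          have hL1 : Real.log (maxf + 1) ≤ L t := by
            have h₁ := hLlow t htT
            have h₂ : (Real.log (maxf + 1) - L T) / δ₀
                ≤ max 0 ((Real.log (maxf + 1) - L T) / δ₀) := le_max_right _ _
            have h₃ : Real.log (maxf + 1) - L T ≤ δ₀ * (t - T) := by
              have h₄ : t - T ≥ max 0 ((Real.log (maxf + 1) - L T) / δ₀) + 1 := by
                rw [ht₃def] at ht; linarith
              have h₅ : (Real.log (maxf + 1) - L T) / δ₀ ≤ t - T := by linarith
              calc Real.log (maxf + 1) - L T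
                  = ((Real.log (maxf + 1) - L T) / δ₀) * δ₀ := by field_simp
                _ ≤ (t - T) * δ₀ := mul_le_mul_of_nonneg_right h₅ hδ₀pos.le
                _ = δ₀ * (t - T) := by ring
            linarith
          calc maxf + 1 = Real.exp (Real.log (maxf + 1)) :=
                (Real.exp_log (by linarith)).symm
            _ ≤ Real.exp (L t) := Real.exp_le_exp.mpr hL1
            _ = g t * (1 - x t) := hexpL t htT
        -- now log (1 - x) grows linearly : contradiction
        set r : ℝ → ℝ := fun t => Real.log (1 - x t) - (1 - ε₀) * t with hrdef
        have hrd : ∀ t, t₃ ≤ t → HasDerivAt r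
            ((-(x t * (1 - x t) * ((a + d - b - c) * x t + (b - d) - g t * (1 - x t))))
              / (1 - x t) - (1 - ε₀)) t := by
          intro t ht
          have h0t : (0:ℝ) ≤ t := le_trans (le_trans hT0 ht₃T) ht
          have hxne : 1 - x t ≠ 0 := ne_of_gt (by linarith [hxlt1 t h0t])
          have h₁ : HasDerivAt (fun t : ℝ => (1 - ε₀) * t) (1 - ε₀) t := by
            simpa using (hasDerivAt_id t).const_mul (1 - ε₀)
          exact (((hsol t h0t).1.const_sub 1).log hxne).sub h₁
        have hrmono := monoIci r _ t₃ hrd (by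
          intro t ht
          show 0 ≤ (-(x t * (1 - x t) * ((a + d - b - c) * x t + (b - d)
            - g t * (1 - x t)))) / (1 - x t) - (1 - ε₀)
          have htT : T ≤ t := le_trans ht₃T ht
          have h0t : (0:ℝ) ≤ t := le_trans hT0 htT
          have hx1 : x t < 1 := hxlt1 t h0t
          have hxe : 1 - ε₀ ≤ x t := hxge t htT
          have hxne : (0:ℝ) < 1 - x t := by linarith
          have hu := hular t ht
          have hfb : (a + d - b - c) * x t + (b - d) ≤ maxf :=
            hfle (x t) (hxge0 t h0t) hx1.le
          have hquot : (-(x t * (1 - x t) * ((a + d - b - c) * x t + (b - d)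
              - g t * (1 - x t)))) / (1 - x t)
              = x t * (g t * (1 - x t) - ((a + d - b - c) * x t + (b - d))) := by
            field_simp
            ring
          rw [hquot]
          have hge1 : (1:ℝ) ≤ g t * (1 - x t) - ((a + d - b - c) * x t + (b - d)) := by
            linarith
          have : (1 - ε₀) * 1 ≤ x t * (g t * (1 - x t)
              - ((a + d - b - c) * x t + (b - d))) := by
            apply mul_le_mul hxe hge1 (by norm_num) (hxge0 t h0t)
          linarith)
        -- evaluate at a late time
        set tbad := t₃ + (max 0 (-(Real.log (1 - x t₃))) + 1) / (1 - ε₀) with htbaddef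
        have hε₀1 : (0:ℝ) < 1 - ε₀ := by linarith
        have htbad : t₃ ≤ tbad := by
          rw [htbaddef]
          have : 0 ≤ (max 0 (-(Real.log (1 - x t₃))) + 1) / (1 - ε₀) := by positivity
          linarith
        have hr1 := hrmono t₃ tbad le_rfl htbad
        have h0t₃ : (0:ℝ) ≤ t₃ := le_trans hT0 ht₃T
        have h0tbad : (0:ℝ) ≤ tbad := le_trans h0t₃ htbad
        have hlogneg : Real.log (1 - x tbad) < 0 := by
          apply Real.log_neg
          · linarith [hxlt1 tbad h0tbad]
          · linarith [hxpos tbad h0tbad]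
        have hrineq : Real.log (1 - x t₃) + (1 - ε₀) * (tbad - t₃)
            ≤ Real.log (1 - x tbad) := by
          simp only [hrdef] at hr1
          linarith
        have hval : (1 - ε₀) * (tbad - t₃) = max 0 (-(Real.log (1 - x t₃))) + 1 := by
          have hne : (1:ℝ) - ε₀ ≠ 0 := ne_of_gt hε₀1
          rw [htbaddef]
          field_simp
          ring
        have hgemax : -(Real.log (1 - x t₃)) ≤ max 0 (-(Real.log (1 - x t₃))) :=
          le_max_right _ _
        rw [hval] at hrineq
        linarith
    -- conclusion on g
    have hbdd : BddAbove (range Φ) := ⟨B, fun v hv => by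
      obtain ⟨t, rfl⟩ := hv; exact hB t⟩
    have hΦtend : Tendsto Φ atTop (nhds (⨆ t, Φ t)) := tendsto_atTop_ciSup hΦmono hbdd
    have hgbar : (0:ℝ) < g 0 * Real.exp (⨆ t, Φ t) := by positivity
    have hgtend : Tendsto g atTop (nhds (g 0 * Real.exp (⨆ t, Φ t))) := by
      have h2' : Tendsto (fun t => g 0 * Real.exp (Φ t)) atTop
          (nhds (g 0 * Real.exp (⨆ t, Φ t))) :=
        (Real.continuous_exp.continuousAt.tendsto.comp hΦtend).const_mul (g 0)
      apply Tendsto.congr' (f₁ := fun t => g 0 * Real.exp (Φ t)) _ h2'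
      filter_upwards [eventually_ge_atTop (0:ℝ)] with t ht
      exact (hgrep t ht).symm
    -- Barbălat argument : x → 0
    have hxtend : Tendsto x atTop (nhds 0) := by
      by_contra hnot
      rw [Metric.tendsto_atTop] at hnot
      push_neg at hnot
      obtain ⟨ε, hε, hfreq⟩ := hnot
      -- g is bounded
      set gmax := g 0 * Real.exp B with hgmaxdef
      have hgmax : ∀ t, 0 ≤ t → g t ≤ gmax := fun t ht => by
        rw [hgrep t ht, hgmaxdef]
        exact mul_le_mul_of_nonneg_left (Real.exp_le_exp.mpr (hB t)) hg0.le
      have hgmaxpos : 0 < gmax := by positivity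
      set M := maxf + gmax + 1 with hMdef
      have hMpos : 0 < M := by positivity
      -- the vector field is bounded, so x is M-Lipschitz on [0,∞)
      have hfge : ∀ y : ℝ, 0 ≤ y → y ≤ 1 → 0 ≤ (a + d - b - c) * y + (b - d) := by
        intro y hy hy1
        have hid : (a + d - b - c) * y + (b - d) = y * (a - c) + (1 - y) * (b - d) := by ring
        rw [hid]
        have : 0 ≤ y * (a - c) := mul_nonneg hy (by linarith)
        have : 0 ≤ (1 - y) * (b - d) := mul_nonneg (by linarith) (by linarith)
        linarith
      have hder_bound : ∀ t, 0 ≤ t →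
          |x t * (1 - x t) * ((a + d - b - c) * x t + (b - d) - g t * (1 - x t))| ≤ M := by
        intro t ht
        have hx0' := hxge0 t ht
        have hx1' := hxlt1 t ht
        have hg0' := (hgpos t ht).le
        have hg1' := hgmax t ht
        have hfl := hfle (x t) hx0' hx1'.le
        have hfg := hfge (x t) hx0' hx1'.le
        have hu0 : 0 ≤ g t * (1 - x t) := mul_nonneg hg0' (by linarith)
        have hu1 : g t * (1 - x t) ≤ gmax := by
          calc g t * (1 - x t) ≤ g t * 1 := by
                apply mul_le_mul_of_nonneg_left (by linarith) hg0'
            _ = g t := mul_one _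
            _ ≤ gmax := hg1'
        have habs1 : |x t * (1 - x t)| ≤ 1 := by
          rw [abs_mul]
          have h1' : |x t| ≤ 1 := by rw [abs_of_nonneg hx0']; linarith
          have h2' : |1 - x t| ≤ 1 := by rw [abs_of_nonneg (by linarith)]; linarith
          calc |x t| * |1 - x t| ≤ 1 * 1 := by
                apply mul_le_mul h1' h2' (abs_nonneg _) zero_le_one
            _ = 1 := by norm_num
        have habs2 : |(a + d - b - c) * x t + (b - d) - g t * (1 - x t)| ≤ maxf + gmax := by
          rw [abs_le]
          constructor <;> nlinarith
        rw [abs_mul]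
        calc |x t * (1 - x t)| * |(a + d - b - c) * x t + (b - d) - g t * (1 - x t)|
            ≤ 1 * (maxf + gmax) := by
              apply mul_le_mul habs1 habs2 (abs_nonneg _) zero_le_one
          _ = maxf + gmax := one_mul _
          _ ≤ M := by rw [hMdef]; linarith
      have hlip : ∀ s t : ℝ, 0 ≤ s → 0 ≤ t → |x t - x s| ≤ M * |t - s| := by
        intro s t hs ht
        have := Convex.norm_image_sub_le_of_norm_hasDerivWithin_le
          (f := x)
          (f' := fun t => x t * (1 - x t) *
            ((a + d - b - c) * x t + (b - d) - g t * (1 - x t)))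
          (s := Ici (0:ℝ))
          (fun u hu => ((hsol u hu).1).hasDerivWithinAt)
          (fun u hu => by
            rw [Real.norm_eq_abs]
            exact hder_bound u hu)
          (convex_Ici 0) hs ht
        simpa [Real.norm_eq_abs] using this
      -- ε < 1
      have hε1 : ε < 1 := by
        obtain ⟨t₀, ht₀N, ht₀⟩ := hfreq 0
        have h0t₀ : (0:ℝ) ≤ t₀ := ht₀N
        have : ε ≤ x t₀ := by
          rwa [Real.dist_eq, sub_zero, abs_of_nonneg (hxge0 t₀ h0t₀)] at ht₀
        linarith [hxlt1 t₀ h0t₀]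
      -- minimum of φ on [ε/2, 1]
      obtain ⟨ymin, hymem, hymin⟩ :=
        isCompact_Icc.exists_isMinOn (Set.nonempty_Icc.mpr (by linarith : ε/2 ≤ 1))
          (hφc.continuousOn (s := Icc (ε/2) 1))
      set m := φ ymin with hmdef
      have hm : 0 < m := h1 ymin (lt_of_lt_of_le (by linarith) hymem.1) hymem.2
      set rr := ε / (2 * M) with hrrdef
      have hrr : 0 < rr := by positivity
      have hMrr : M * rr = ε / 2 := by
        rw [hrrdef]; field_simp
      -- key step : the integral increases by at least m * rr beyond any time
      have key : ∀ N : ℝ, 0 ≤ N → ∃ t', N ≤ t' ∧ 0 ≤ t' ∧ Φ N + m * rr ≤ Φ t' := by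
        intro N hN
        obtain ⟨t, htN, htx⟩ := hfreq (N + rr)
        have h0t : (0:ℝ) ≤ t := le_trans (by linarith) htN
        have hxt : ε ≤ x t := by
          rwa [Real.dist_eq, sub_zero, abs_of_nonneg (hxge0 t h0t)] at htx
        refine ⟨t, by linarith, h0t, ?_⟩
        have hmono1 : Φ N ≤ Φ (t - rr) := hΦmono (by linarith)
        have hlow : ∀ s ∈ Icc (t - rr) t, m ≤ ψg s := by
          intro s hs
          have h0s : (0:ℝ) ≤ s := by linarith [hs.1]
          have hdist : |x t - x s| ≤ ε / 2 := by
            have h₁ := hlip s t h0s h0t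
            have h₂ : |t - s| ≤ rr := by
              rw [abs_of_nonneg (by linarith [hs.2])]
              linarith [hs.1]
            calc |x t - x s| ≤ M * |t - s| := h₁
              _ ≤ M * rr := mul_le_mul_of_nonneg_left h₂ hMpos.le
              _ = ε / 2 := hMrr
          have hxs_ge : ε/2 ≤ x s := by
            have := abs_le.mp hdist
            linarith [this.1]
          have hxs_le : x s ≤ 1 := (hxlt1 s h0s).le
          have hXs : X s = x s := hXeq s h0s
          calc m ≤ φ (x s) := hymin ⟨hxs_ge, hxs_le⟩
            _ = ψg s := by rw [hψgdef]; simp only [hXs]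
        have hint : m * rr ≤ ∫ s in (t - rr)..t, ψg s := by
          have hcmp := intervalIntegral.integral_mono_on (μ := MeasureTheory.volume) (by linarith : t - rr ≤ t)
            ((continuous_const (y := m)).intervalIntegrable (t - rr) t) (hψgc.intervalIntegrable _ _) hlow
          rw [intervalIntegral.integral_const] at hcmp
          have : t - (t - rr) = rr := by ring
          rw [this] at hcmp
          simpa [mul_comm] using hcmp
        have hsplit : Φ (t - rr) + ∫ s in (t - rr)..t, ψg s = Φ t := by
          rw [hΦdef]
          exact intervalIntegral.integral_add_adjacent_intervals
            (hψgc.intervalIntegrable 0 (t - rr)) (hψgc.intervalIntegrable (t - rr) t)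
        linarith
      -- iterate the key step to contradict boundedness of Φ
      set F : {v : ℝ // 0 ≤ v} → {v : ℝ // 0 ≤ v} :=
        fun v => ⟨(key v.1 v.2).choose, (key v.1 v.2).choose_spec.2.1⟩ with hFdef
      set u : ℕ → {v : ℝ // 0 ≤ v} := fun n => F^[n] ⟨0, le_rfl⟩ with hudef
      have hstep : ∀ n : ℕ, Φ (u n).1 + m * rr ≤ Φ (u (n+1)).1 := by
        intro n
        have hit : u (n+1) = F (u n) := by
          rw [hudef]
          exact Function.iterate_succ_apply' F n _
        rw [hit]
        exact (key (u n).1 (u n).2).choose_spec.2.2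
      have hiter : ∀ n : ℕ, Φ 0 + n * (m * rr) ≤ Φ (u n).1 := by
        intro n
        induction n with
        | zero => simp [hudef]
        | succ p ih =>
            have := hstep p
            push_cast
            push_cast at ih
            linarith
      obtain ⟨n, hn⟩ := exists_nat_gt ((B - Φ 0) / (m * rr))
      have h₁ := hiter n
      have h₂ := hB (u n).1
      have h₃ : (B - Φ 0) / (m * rr) * (m * rr) < n * (m * rr) :=
        mul_lt_mul_of_pos_right hn (by positivity)
      rw [div_mul_cancel₀ _ (by positivity : m * rr ≠ 0)] at h₃
      linarith
    exact ⟨hxtend, g 0 * Real.exp (⨆ t, Φ t), hgbar, hgtend⟩
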